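/- Progress for LL(1) derivatives: for every LL(1) syntax s : Syntax A (i.e. ¬HasConflict s) and every token t with kind t ∈ First s, and for all token sequences ts and values v : A, Matches s (t :: ts) v if and only if Matches (δ t s) ts v. -/
import Mathlib


set_option autoImplicit false

/-- Context-free syntaxes (value-aware context-free expressions). -/
inductive Syn (Token Kind : Type) (Var : Type → Type) : Type → Type 1 where
  | elem (k : Kind) : Syn Token Kind Var Token
  | fail {A : Type} : Syn Token Kind Var A
  | eps {A : Type} (v : A) : Syn Token Kind Var A
  | disj {A : Type} (s₁ s₂ : Syn Token Kind Var A) : Syn Token Kind Var A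
  | seqn {A B : Type} (s₁ : Syn Token Kind Var A) (s₂ : Syn Token Kind Var B) :
      Syn Token Kind Var (A × B)
  | map {A B : Type} (f : A → B) (s : Syn Token Kind Var A) : Syn Token Kind Var B
  | var {A : Type} (x : Var A) : Syn Token Kind Var A

section

variable {Token Kind : Type} {Var : Type → Type}
variable (kd : Token → Kind) (env : ∀ A : Type, Var A → Syn Token Kind Var A)

/-- Semantics of syntaxes. -/
inductive Matches : ∀ {A : Type}, Syn Token Kind Var A → List Token → A → Prop where
  | elem {k : Kind} {t : Token} (h : kd t = k) : Matches (Syn.elem k) [t] t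
  | eps {A : Type} (v : A) : Matches (Syn.eps v) [] v
  | disjL {A : Type} {s₁ s₂ : Syn Token Kind Var A} {ts : List Token} {v : A} :
      Matches s₁ ts v → Matches (Syn.disj s₁ s₂) ts v
  | disjR {A : Type} {s₁ s₂ : Syn Token Kind Var A} {ts : List Token} {v : A} :
      Matches s₂ ts v → Matches (Syn.disj s₁ s₂) ts v
  | seqn {A B : Type} {s₁ : Syn Token Kind Var A} {s₂ : Syn Token Kind Var B}
      {ts₁ ts₂ : List Token} {v₁ : A} {v₂ : B} :
      Matches s₁ ts₁ v₁ → Matches s₂ ts₂ v₂ →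
      Matches (Syn.seqn s₁ s₂) (ts₁ ++ ts₂) (v₁, v₂)
  | map {A B : Type} (f : A → B) {s : Syn Token Kind Var A} {ts : List Token} {v : A} :
      Matches s ts v → Matches (Syn.map f s) ts (f v)
  | var {A : Type} (x : Var A) {ts : List Token} {v : A} :
      Matches (env A x) ts v → Matches (Syn.var x) ts v

/-- Productivity. -/
inductive Productive : ∀ {A : Type}, Syn Token Kind Var A → Prop where
  | eps {A : Type} (v : A) : Productive (Syn.eps v)
  | elem (k : Kind) : Productive (Syn.elem k)
  | disjL {A : Type} {s₁ s₂ : Syn Token Kind Var A} :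
      Productive s₁ → Productive (Syn.disj s₁ s₂)
  | disjR {A : Type} {s₁ s₂ : Syn Token Kind Var A} :
      Productive s₂ → Productive (Syn.disj s₁ s₂)
  | seqn {A B : Type} {s₁ : Syn Token Kind Var A} {s₂ : Syn Token Kind Var B} :
      Productive s₁ → Productive s₂ → Productive (Syn.seqn s₁ s₂)
  | map {A B : Type} (f : A → B) {s : Syn Token Kind Var A} :
      Productive s → Productive (Syn.map f s)
  | var {A : Type} (x : Var A) : Productive (env A x) → Productive (Syn.var x)

/-- Nullability, with associated value. -/
inductive Nullable : ∀ {A : Type}, Syn Token Kind Var A → A → Prop where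
  | eps {A : Type} (v : A) : Nullable (Syn.eps v) v
  | disjL {A : Type} {s₁ s₂ : Syn Token Kind Var A} {v : A} :
      Nullable s₁ v → Nullable (Syn.disj s₁ s₂) v
  | disjR {A : Type} {s₁ s₂ : Syn Token Kind Var A} {v : A} :
      Nullable s₂ v → Nullable (Syn.disj s₁ s₂) v
  | seqn {A B : Type} {s₁ : Syn Token Kind Var A} {s₂ : Syn Token Kind Var B} {v₁ : A} {v₂ : B} :
      Nullable s₁ v₁ → Nullable s₂ v₂ → Nullable (Syn.seqn s₁ s₂) (v₁, v₂)
  | map {A B : Type} (f : A → B) {s : Syn Token Kind Var A} {v : A} :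
      Nullable s v → Nullable (Syn.map f s) (f v)
  | var {A : Type} (x : Var A) {v : A} : Nullable (env A x) v → Nullable (Syn.var x) v

/-- First sets: `InFirst env k s` means `k ∈ First s`. -/
inductive InFirst : ∀ {A : Type}, Kind → Syn Token Kind Var A → Prop where
  | elem (k : Kind) : InFirst k (Syn.elem k)
  | disjL {A : Type} {k : Kind} {s₁ s₂ : Syn Token Kind Var A} :
      InFirst k s₁ → InFirst k (Syn.disj s₁ s₂)
  | disjR {A : Type} {k : Kind} {s₁ s₂ : Syn Token Kind Var A} :
      InFirst k s₂ → InFirst k (Syn.disj s₁ s₂)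
  | seqnL {A B : Type} {k : Kind} {s₁ : Syn Token Kind Var A} {s₂ : Syn Token Kind Var B} :
      InFirst k s₁ → Productive env s₂ → InFirst k (Syn.seqn s₁ s₂)
  | seqnR {A B : Type} {k : Kind} {s₁ : Syn Token Kind Var A} {s₂ : Syn Token Kind Var B}
      {v : A} : Nullable env s₁ v → InFirst k s₂ → InFirst k (Syn.seqn s₁ s₂)
  | map {A B : Type} {k : Kind} (f : A → B) {s : Syn Token Kind Var A} :
      InFirst k s → InFirst k (Syn.map f s)
  | var {A : Type} {k : Kind} (x : Var A) : InFirst k (env A x) → InFirst k (Syn.var x)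

/-- Should-not-follow sets: `InSNF env k s` means `k ∈ ShouldNotFollow s`. -/
inductive InSNF : ∀ {A : Type}, Kind → Syn Token Kind Var A → Prop where
  | disjL {A : Type} {k : Kind} {s₁ s₂ : Syn Token Kind Var A} :
      InSNF k s₁ → InSNF k (Syn.disj s₁ s₂)
  | disjR {A : Type} {k : Kind} {s₁ s₂ : Syn Token Kind Var A} :
      InSNF k s₂ → InSNF k (Syn.disj s₁ s₂)
  | disjFN {A : Type} {k : Kind} {s₁ s₂ : Syn Token Kind Var A} {v : A} :
      InFirst env k s₁ → Nullable env s₂ v → InSNF k (Syn.disj s₁ s₂)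
  | disjNF {A : Type} {k : Kind} {s₁ s₂ : Syn Token Kind Var A} {v : A} :
      Nullable env s₁ v → InFirst env k s₂ → InSNF k (Syn.disj s₁ s₂)
  | seqnL {A B : Type} {k : Kind} {s₁ : Syn Token Kind Var A} {s₂ : Syn Token Kind Var B}
      {v : B} : InSNF k s₁ → Nullable env s₂ v → InSNF k (Syn.seqn s₁ s₂)
  | seqnR {A B : Type} {k : Kind} {s₁ : Syn Token Kind Var A} {s₂ : Syn Token Kind Var B} :
      Productive env s₁ → InSNF k s₂ → InSNF k (Syn.seqn s₁ s₂)
  | map {A B : Type} {k : Kind} (f : A → B) {s : Syn Token Kind Var A} :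
      InSNF k s → InSNF k (Syn.map f s)
  | var {A : Type} {k : Kind} (x : Var A) : InSNF k (env A x) → InSNF k (Syn.var x)

/-- LL(1) conflicts. A syntax `s` is LL(1) iff `¬ HasConflict env s`. -/
inductive HasConflict : ∀ {A : Type}, Syn Token Kind Var A → Prop where
  | disjNN {A : Type} {s₁ s₂ : Syn Token Kind Var A} {v₁ v₂ : A} :
      Nullable env s₁ v₁ → Nullable env s₂ v₂ → HasConflict (Syn.disj s₁ s₂)
  | disjFF {A : Type} {s₁ s₂ : Syn Token Kind Var A} {k : Kind} :
      InFirst env k s₁ → InFirst env k s₂ → HasConflict (Syn.disj s₁ s₂)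
  | disjL {A : Type} {s₁ s₂ : Syn Token Kind Var A} :
      HasConflict s₁ → HasConflict (Syn.disj s₁ s₂)
  | disjR {A : Type} {s₁ s₂ : Syn Token Kind Var A} :
      HasConflict s₂ → HasConflict (Syn.disj s₁ s₂)
  | seqnSF {A B : Type} {s₁ : Syn Token Kind Var A} {s₂ : Syn Token Kind Var B} {k : Kind} :
      InSNF env k s₁ → InFirst env k s₂ → HasConflict (Syn.seqn s₁ s₂)
  | seqnL {A B : Type} {s₁ : Syn Token Kind Var A} {s₂ : Syn Token Kind Var B} :
      HasConflict s₁ → HasConflict (Syn.seqn s₁ s₂)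
  | seqnR {A B : Type} {s₁ : Syn Token Kind Var A} {s₂ : Syn Token Kind Var B} :
      HasConflict s₂ → HasConflict (Syn.seqn s₁ s₂)
  | map {A B : Type} (f : A → B) {s : Syn Token Kind Var A} :
      HasConflict s → HasConflict (Syn.map f s)
  | var {A : Type} (x : Var A) : HasConflict (env A x) → HasConflict (Syn.var x)

end

/-- Layers of a context, with above type `A` and below type `B`. -/
inductive Layer (Token Kind : Type) (Var : Type → Type) : Type → Type → Type 1 where
  | apply {A B : Type} (f : A → B) : Layer Token Kind Var A B
  | prepend {A C : Type} (v : C) : Layer Token Kind Var A (C × A)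
  | followBy {A C : Type} (s : Syn Token Kind Var C) : Layer Token Kind Var A (A × C)

/-- Type-aligned contexts (stacks of layers). -/
inductive Ctx (Token Kind : Type) (Var : Type → Type) : Type → Type → Type 1 where
  | nil {A : Type} : Ctx Token Kind Var A A
  | cons {A B C : Type} (l : Layer Token Kind Var A B) (c : Ctx Token Kind Var B C) :
      Ctx Token Kind Var A C

section

variable {Token Kind : Type} {Var : Type → Type}

def Ctx.isNil : ∀ {A B : Type}, Ctx Token Kind Var A B → Bool
  | _, _, Ctx.nil => true
  | _, _, Ctx.cons _ _ => false

/-- Unfocusing a focused syntax. -/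
def unfocus : ∀ {A B : Type}, Syn Token Kind Var A → Ctx Token Kind Var A B →
    Syn Token Kind Var B
  | _, _, s, Ctx.nil => s
  | _, _, s, Ctx.cons (Layer.apply f) c => unfocus (Syn.map f s) c
  | _, _, s, Ctx.cons (Layer.prepend v) c => unfocus (Syn.seqn (Syn.eps v) s) c
  | _, _, s, Ctx.cons (Layer.followBy s') c => unfocus (Syn.seqn s s') c

/-- Focused syntaxes with below type `B`. -/
def Focused (Token Kind : Type) (Var : Type → Type) (B : Type) : Type 1 :=
  (A : Type) × Syn Token Kind Var A × Ctx Token Kind Var A B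

def unfocusF {B : Type} (fs : Focused Token Kind Var B) : Syn Token Kind Var B :=
  unfocus fs.2.1 fs.2.2

def focusF {A : Type} (s : Syn Token Kind Var A) : Focused Token Kind Var A :=
  ⟨A, s, Ctx.nil⟩

/-- Plugging a value into a context. -/
def plug : ∀ {A B : Type}, A → Ctx Token Kind Var A B → Focused Token Kind Var B
  | A, _, v, Ctx.nil => ⟨A, Syn.eps v, Ctx.nil⟩
  | _, _, v, Ctx.cons (Layer.apply f) c => plug (f v) c
  | _, _, v, Ctx.cons (Layer.prepend v') c => plug (v', v) c
  | _, _, v, Ctx.cons (Layer.followBy s) c => ⟨_, s, Ctx.cons (Layer.prepend v) c⟩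

end

section

variable {Token Kind : Type} {Var : Type → Type}
variable (kd : Token → Kind) (env : ∀ A : Type, Var A → Syn Token Kind Var A)

theorem null_matches {A : Type} {s : Syn Token Kind Var A} {v : A}
    (h : Nullable env s v) : Matches kd env s [] v := by
  induction h with
  | eps v => exact Matches.eps v
  | disjL _ ih => exact Matches.disjL ih
  | disjR _ ih => exact Matches.disjR ih
  | seqn _ _ ih1 ih2 => exact Matches.seqn ih1 ih2
  | map f _ ih => exact Matches.map f ih
  | var x _ ih => exact Matches.var x ih

theorem null_prod {A : Type} {s : Syn Token Kind Var A} {v : A}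
    (h : Nullable env s v) : Productive env s := by
  induction h with
  | eps v => exact Productive.eps v
  | disjL _ ih => exact Productive.disjL ih
  | disjR _ ih => exact Productive.disjR ih
  | seqn _ _ ih1 ih2 => exact Productive.seqn ih1 ih2
  | map f _ ih => exact Productive.map f ih
  | var x _ ih => exact Productive.var x ih

theorem matches_prod {A : Type} {s : Syn Token Kind Var A} {ts : List Token} {v : A}
    (h : Matches kd env s ts v) : Productive env s := by
  induction h with
  | elem h => exact Productive.elem _
  | eps v => exact Productive.eps v
  | disjL _ ih => exact Productive.disjL ih
  | disjR _ ih => exact Productive.disjR ih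
  | seqn _ _ ih1 ih2 => exact Productive.seqn ih1 ih2
  | map f _ ih => exact Productive.map f ih
  | var x _ ih => exact Productive.var x ih

theorem matches_nil_null {A : Type} {s : Syn Token Kind Var A} {ts : List Token} {v : A}
    (h : Matches kd env s ts v) (hts : ts = []) : Nullable env s v := by
  induction h with
  | elem h => simp at hts
  | eps v => exact Nullable.eps v
  | disjL _ ih => exact Nullable.disjL (ih hts)
  | disjR _ ih => exact Nullable.disjR (ih hts)
  | seqn _ _ ih1 ih2 =>
    rcases List.append_eq_nil_iff.mp hts with ⟨h1, h2⟩
    exact Nullable.seqn (ih1 h1) (ih2 h2)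
  | map f _ ih => exact Nullable.map f (ih hts)
  | var x _ ih => exact Nullable.var x (ih hts)

theorem matches_cons_first {A : Type} {s : Syn Token Kind Var A} {ts : List Token} {v : A}
    (h : Matches kd env s ts v) :
    ∀ (t : Token) (ts' : List Token), ts = t :: ts' → InFirst env (kd t) s := by
  induction h with
  | @elem k t h =>
    intro t' ts' hts
    injection hts with h1 h2
    subst h1
    rw [h]
    exact InFirst.elem _
  | eps v => intro t ts' hts; simp at hts
  | disjL _ ih => intro t ts' hts; exact InFirst.disjL (ih t ts' hts)
  | disjR _ ih => intro t ts' hts; exact InFirst.disjR (ih t ts' hts)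
  | @seqn _ _ _ _ ts₁ ts₂ _ _ h1 h2 ih1 ih2 =>
    intro t ts' hts
    cases ts₁ with
    | nil =>
      exact InFirst.seqnR (matches_nil_null kd env h1 rfl) (ih2 t ts' hts)
    | cons a rest =>
      rw [List.cons_append] at hts
      cases hts
      exact InFirst.seqnL (ih1 t _ rfl) (matches_prod kd env h2)
  | map f _ ih => intro t ts' hts; exact InFirst.map f (ih t ts' hts)
  | var x _ ih => intro t ts' hts; exact InFirst.var x (ih t ts' hts)

/-- Inversion predicate for `Nullable`. -/
def NullInv : ∀ {A : Type}, Syn Token Kind Var A → A → Prop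
  | _, Syn.eps v₀, v => v = v₀
  | _, Syn.disj s₁ s₂, v => Nullable env s₁ v ∨ Nullable env s₂ v
  | _, Syn.seqn s₁ s₂, v => Nullable env s₁ v.1 ∧ Nullable env s₂ v.2
  | _, Syn.map f s, v => ∃ v', v = f v' ∧ Nullable env s v'
  | _, Syn.var x, v => Nullable env (env _ x) v
  | _, Syn.elem _, _ => False
  | _, Syn.fail, _ => False

theorem null_inv {A : Type} {s : Syn Token Kind Var A} {v : A}
    (h : Nullable env s v) : NullInv env s v := by
  induction h with
  | eps v => exact rfl
  | disjL h _ => exact Or.inl h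
  | disjR h _ => exact Or.inr h
  | seqn h1 h2 _ _ => exact ⟨h1, h2⟩
  | map f h ih => exact ⟨_, rfl, h⟩
  | var x h ih => exact h

theorem first_null_snf {A : Type} {k : Kind} {s : Syn Token Kind Var A}
    (hf : InFirst env k s) : ∀ w : A, Nullable env s w → InSNF env k s := by
  induction hf with
  | elem k => intro w hw; exact absurd (null_inv env hw) id
  | disjL h1 ih =>
    intro w hw
    rcases null_inv env hw with h | h
    · exact InSNF.disjL (ih _ h)
    · exact InSNF.disjFN h1 h
  | disjR h2 ih =>
    intro w hw
    rcases null_inv env hw with h | h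
    · exact InSNF.disjNF h h2
    · exact InSNF.disjR (ih _ h)
  | seqnL h1 hp ih =>
    intro w hw
    obtain ⟨ha, hb⟩ := null_inv env hw
    exact InSNF.seqnL (ih _ ha) hb
  | seqnR hn h2 ih =>
    intro w hw
    obtain ⟨ha, hb⟩ := null_inv env hw
    exact InSNF.seqnR (null_prod env ha) (ih _ hb)
  | map f _ ih =>
    intro w hw
    obtain ⟨v', hv, h⟩ := null_inv env hw
    exact InSNF.map f (ih _ h)
  | var x _ ih =>
    intro w hw
    exact InSNF.var x (ih _ (null_inv env hw))

/-- Inversion predicate for `Matches`. -/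
def MatchInv : ∀ {A : Type}, Syn Token Kind Var A → List Token → A → Prop
  | _, Syn.elem k, ts, v => ts = [v] ∧ kd v = k
  | _, Syn.fail, _, _ => False
  | _, Syn.eps v₀, ts, v => ts = [] ∧ v = v₀
  | _, Syn.disj s₁ s₂, ts, v => Matches kd env s₁ ts v ∨ Matches kd env s₂ ts v
  | _, Syn.seqn s₁ s₂, ts, v =>
      ∃ ts₁ ts₂, ts = ts₁ ++ ts₂ ∧ Matches kd env s₁ ts₁ v.1 ∧ Matches kd env s₂ ts₂ v.2
  | _, Syn.map f s, ts, v => ∃ v', v = f v' ∧ Matches kd env s ts v'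
  | _, Syn.var x, ts, v => Matches kd env (env _ x) ts v

theorem matches_inv {A : Type} {s : Syn Token Kind Var A} {ts : List Token} {v : A}
    (h : Matches kd env s ts v) : MatchInv kd env s ts v := by
  induction h with
  | elem h => exact ⟨rfl, h⟩
  | eps v => exact ⟨rfl, rfl⟩
  | disjL h _ => exact Or.inl h
  | disjR h _ => exact Or.inr h
  | @seqn _ _ _ _ ts₁ ts₂ _ _ h1 h2 _ _ => exact ⟨ts₁, ts₂, rfl, h1, h2⟩
  | map f h ih => exact ⟨_, rfl, h⟩
  | var x h ih => exact h

theorem matches_disj_inv {A : Type} {s₁ s₂ : Syn Token Kind Var A} {ts : List Token} {v : A}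
    (h : Matches kd env (Syn.disj s₁ s₂) ts v) :
    Matches kd env s₁ ts v ∨ Matches kd env s₂ ts v :=
  matches_inv kd env h

theorem matches_seqn_inv {A B : Type} {s₁ : Syn Token Kind Var A} {s₂ : Syn Token Kind Var B}
    {ts : List Token} {v : A × B}
    (h : Matches kd env (Syn.seqn s₁ s₂) ts v) :
    ∃ (ts₁ ts₂ : List Token) (v₁ : A) (v₂ : B),
      ts = ts₁ ++ ts₂ ∧ v = (v₁, v₂) ∧ Matches kd env s₁ ts₁ v₁ ∧ Matches kd env s₂ ts₂ v₂ := by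
  obtain ⟨ts₁, ts₂, hts, h1, h2⟩ := matches_inv kd env h
  exact ⟨ts₁, ts₂, v.1, v.2, hts, rfl, h1, h2⟩

theorem matches_map_inv {A B : Type} {f : A → B} {s : Syn Token Kind Var A}
    {ts : List Token} {v : B}
    (h : Matches kd env (Syn.map f s) ts v) :
    ∃ v' : A, v = f v' ∧ Matches kd env s ts v' :=
  matches_inv kd env h

theorem matches_var_inv {A : Type} {x : Var A} {ts : List Token} {v : A}
    (h : Matches kd env (Syn.var x) ts v) : Matches kd env (env A x) ts v :=
  matches_inv kd env h

theorem matches_eps_inv {A : Type} {v₀ : A} {ts : List Token} {v : A}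
    (h : Matches kd env (Syn.eps v₀ : Syn Token Kind Var A) ts v) :
    ts = [] ∧ v = v₀ :=
  matches_inv kd env h

theorem matches_elem_inv {k : Kind} {ts : List Token} {v : Token}
    (h : Matches kd env (Syn.elem k : Syn Token Kind Var Token) ts v) :
    ts = [v] ∧ kd v = k :=
  matches_inv kd env h

theorem derive_progress
    (nullOpt : ∀ {A : Type}, Syn Token Kind Var A → Option A)
    (hnull : ∀ {A : Type} (s : Syn Token Kind Var A), ¬ HasConflict env s →
      ∀ v : A, nullOpt s = some v ↔ Nullable env s v)
    (delta : ∀ {A : Type}, Token → Syn Token Kind Var A → Syn Token Kind Var A)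
    (hdelta_elem : ∀ (t : Token) (k : Kind),
      ¬ HasConflict env (Syn.elem k : Syn Token Kind Var Token) →
      InFirst env (kd t) (Syn.elem k : Syn Token Kind Var Token) →
      delta t (Syn.elem k) = Syn.eps t)
    (hdelta_disj₁ : ∀ {A : Type} (t : Token) (s₁ s₂ : Syn Token Kind Var A),
      ¬ HasConflict env (Syn.disj s₁ s₂) → InFirst env (kd t) (Syn.disj s₁ s₂) →
      InFirst env (kd t) s₁ → delta t (Syn.disj s₁ s₂) = delta t s₁)
    (hdelta_disj₂ : ∀ {A : Type} (t : Token) (s₁ s₂ : Syn Token Kind Var A),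
      ¬ HasConflict env (Syn.disj s₁ s₂) → InFirst env (kd t) (Syn.disj s₁ s₂) →
      ¬ InFirst env (kd t) s₁ → delta t (Syn.disj s₁ s₂) = delta t s₂)
    (hdelta_seqn₁ : ∀ {A B : Type} (t : Token) (s₁ : Syn Token Kind Var A)
      (s₂ : Syn Token Kind Var B) (v : A),
      ¬ HasConflict env (Syn.seqn s₁ s₂) → InFirst env (kd t) (Syn.seqn s₁ s₂) →
      nullOpt s₁ = some v → InFirst env (kd t) s₂ →
      delta t (Syn.seqn s₁ s₂) = Syn.seqn (Syn.eps v) (delta t s₂))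
    (hdelta_seqn₂ : ∀ {A B : Type} (t : Token) (s₁ : Syn Token Kind Var A)
      (s₂ : Syn Token Kind Var B),
      ¬ HasConflict env (Syn.seqn s₁ s₂) → InFirst env (kd t) (Syn.seqn s₁ s₂) →
      (∀ v : A, nullOpt s₁ = some v → ¬ InFirst env (kd t) s₂) →
      delta t (Syn.seqn s₁ s₂) = Syn.seqn (delta t s₁) s₂)
    (hdelta_map : ∀ {A B : Type} (t : Token) (f : A → B) (s : Syn Token Kind Var A),
      ¬ HasConflict env (Syn.map f s) → InFirst env (kd t) (Syn.map f s) →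
      delta t (Syn.map f s) = Syn.map f (delta t s))
    (hdelta_var : ∀ {A : Type} (t : Token) (x : Var A),
      ¬ HasConflict env (Syn.var x : Syn Token Kind Var A) →
      InFirst env (kd t) (Syn.var x : Syn Token Kind Var A) →
      delta t (Syn.var x) = delta t (env A x))
    {A : Type} (s : Syn Token Kind Var A) (t : Token)
    (hs : ¬ HasConflict env s) (hf : InFirst env (kd t) s)
    (ts : List Token) (v : A) :
    Matches kd env s (t :: ts) v ↔ Matches kd env (delta t s) ts v := by
  revert hs
  generalize hk : kd t = k at hf
  revert hk
  revert ts v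
  induction hf with
  | elem =>
    intro ts v hk hs
    subst hk
    rw [hdelta_elem t _ hs (InFirst.elem _)]
    constructor
    · intro h
      obtain ⟨h1, h2⟩ := matches_elem_inv kd env h
      injection h1 with h3 h4
      subst h3; subst h4
      exact Matches.eps t
    · intro h
      obtain ⟨h1, h2⟩ := matches_eps_inv kd env h
      subst h1; subst h2
      exact Matches.elem rfl
  | @disjL _ _ s₁ s₂ h1 ih =>
    intro ts v hk hs
    subst hk
    have hs1 : ¬ HasConflict env s₁ := fun c => hs (HasConflict.disjL c)
    rw [hdelta_disj₁ t s₁ s₂ hs (InFirst.disjL h1) h1]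
    constructor
    · intro h
      rcases matches_disj_inv kd env h with h | h
      · exact (ih ts v rfl hs1).mp h
      · exact absurd (HasConflict.disjFF h1 (matches_cons_first kd env h t ts rfl)) hs
    · intro h
      exact Matches.disjL ((ih ts v rfl hs1).mpr h)
  | @disjR _ _ s₁ s₂ h2 ih =>
    intro ts v hk hs
    subst hk
    have hs2 : ¬ HasConflict env s₂ := fun c => hs (HasConflict.disjR c)
    have hns1 : ¬ InFirst env (kd t) s₁ := fun hf1 => hs (HasConflict.disjFF hf1 h2)
    rw [hdelta_disj₂ t s₁ s₂ hs (InFirst.disjR h2) hns1]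
    constructor
    · intro h
      rcases matches_disj_inv kd env h with h | h
      · exact absurd (matches_cons_first kd env h t ts rfl) hns1
      · exact (ih ts v rfl hs2).mp h
    · intro h
      exact Matches.disjR ((ih ts v rfl hs2).mpr h)
  | @seqnL _ _ _ s₁ s₂ h1 hp ih =>
    intro ts v hk hs
    subst hk
    have hs1 : ¬ HasConflict env s₁ := fun c => hs (HasConflict.seqnL c)
    have hns : ∀ w, nullOpt s₁ = some w → ¬ InFirst env (kd t) s₂ := by
      intro w hw hf2
      exact hs (HasConflict.seqnSF (first_null_snf env h1 w ((hnull s₁ hs1 w).mp hw)) hf2)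
    rw [hdelta_seqn₂ t s₁ s₂ hs (InFirst.seqnL h1 hp) hns]
    constructor
    · intro h
      obtain ⟨ts₁, ts₂, v₁, v₂, hts, hv, hm1, hm2⟩ := matches_seqn_inv kd env h
      subst hv
      cases ts₁ with
      | nil =>
        simp only [List.nil_append] at hts
        subst hts
        exact absurd (HasConflict.seqnSF
          (first_null_snf env h1 v₁ (matches_nil_null kd env hm1 rfl))
          (matches_cons_first kd env hm2 t ts rfl)) hs
      | cons a rest =>
        rw [List.cons_append] at hts
        injection hts with ha hrest
        subst ha; subst hrest
        exact Matches.seqn ((ih rest v₁ rfl hs1).mp hm1) hm2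
    · intro h
      obtain ⟨ts₁, ts₂, v₁, v₂, hts, hv, hm1, hm2⟩ := matches_seqn_inv kd env h
      subst hv; subst hts
      exact Matches.seqn ((ih ts₁ v₁ rfl hs1).mpr hm1) hm2
  | @seqnR _ _ _ s₁ s₂ w hn h2 ih =>
    intro ts v hk hs
    subst hk
    have hs1 : ¬ HasConflict env s₁ := fun c => hs (HasConflict.seqnL c)
    have hs2 : ¬ HasConflict env s₂ := fun c => hs (HasConflict.seqnR c)
    have hw : nullOpt s₁ = some w := (hnull s₁ hs1 w).mpr hn
    rw [hdelta_seqn₁ t s₁ s₂ w hs (InFirst.seqnR hn h2) hw h2]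
    constructor
    · intro h
      obtain ⟨ts₁, ts₂, v₁, v₂, hts, hv, hm1, hm2⟩ := matches_seqn_inv kd env h
      subst hv
      cases ts₁ with
      | nil =>
        simp only [List.nil_append] at hts
        subst hts
        have hv₁ : w = v₁ := by
          have := (hnull s₁ hs1 v₁).mpr (matches_nil_null kd env hm1 rfl)
          rw [hw] at this
          exact Option.some.inj this
        subst hv₁
        exact Matches.seqn (Matches.eps w) ((ih ts v₂ rfl hs2).mp hm2)
      | cons a rest =>
        rw [List.cons_append] at hts
        injection hts with ha hrest
        subst ha
        exact absurd (HasConflict.seqnSF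
          (first_null_snf env (matches_cons_first kd env hm1 t rest rfl) w hn) h2) hs
    · intro h
      obtain ⟨ts₁, ts₂, v₁, v₂, hts, hv, hm1, hm2⟩ := matches_seqn_inv kd env h
      subst hv
      obtain ⟨h3, h4⟩ := matches_eps_inv kd env hm1
      subst h3; subst h4
      simp only [List.nil_append] at hts
      subst hts
      exact Matches.seqn (null_matches kd env hn) ((ih _ v₂ rfl hs2).mpr hm2)
  | @map _ _ _ f s h ih =>
    intro ts v hk hs
    subst hk
    have hs1 : ¬ HasConflict env s := fun c => hs (HasConflict.map f c)
    rw [hdelta_map t f s hs (InFirst.map f h)]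
    constructor
    · intro hm
      obtain ⟨v', hv, hm'⟩ := matches_map_inv kd env hm
      subst hv
      exact Matches.map f ((ih ts v' rfl hs1).mp hm')
    · intro hm
      obtain ⟨v', hv, hm'⟩ := matches_map_inv kd env hm
      subst hv
      exact Matches.map f ((ih ts v' rfl hs1).mpr hm')
  | @var _ _ x h ih =>
    intro ts v hk hs
    subst hk
    have hs1 : ¬ HasConflict env (env _ x) := fun c => hs (HasConflict.var x c)
    rw [hdelta_var t x hs (InFirst.var x h)]
    constructor
    · intro hm
      exact (ih ts v rfl hs1).mp (matches_var_inv kd env hm)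
    · intro hm
      exact Matches.var x ((ih ts v rfl hs1).mpr hm)

end
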